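/- For every infinite cardinal κ, there exists a family A of subsets of κ, each of cardinality cf(κ), such that |A| = κ⁺ and |A ∩ B| < cf(κ) for any two distinct A, B ∈ A. -/

import Mathlib

open Cardinal Set

universe u

namespace AD8

open Ordinal

/-- The ordinal rank of an element of `o.ToType`. -/
noncomputable def tiO {o : Ordinal.{u}} (x : o.ToType) : Ordinal.{u} :=
  ((ToType.mk (o := o)).symm x).1

/-- The element of `o.ToType` with ordinal rank `ξ < o`. -/
noncomputable def enumO (o : Ordinal.{u}) (ξ : Ordinal.{u}) (h : ξ < o) : o.ToType :=
  (ToType.mk (o := o)) ⟨ξ, h⟩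

theorem tiO_lt {o : Ordinal.{u}} (x : o.ToType) : tiO x < o :=
  ((ToType.mk (o := o)).symm x).2

theorem tiO_injective {o : Ordinal.{u}} : Function.Injective (tiO (o := o)) := by
  intro x y h
  have : (ToType.mk (o := o)).symm x = (ToType.mk (o := o)).symm y := Subtype.ext h
  exact (ToType.mk (o := o)).symm.injective this

theorem tiO_enumO {o ξ : Ordinal.{u}} (h : ξ < o) : tiO (enumO o ξ h) = ξ :=
  congrArg Subtype.val ((ToType.mk (o := o)).symm_apply_apply ⟨ξ, h⟩)

theorem enumO_injective {o : Ordinal.{u}} {ξ₁ ξ₂ : Ordinal.{u}} (h₁ : ξ₁ < o) (h₂ : ξ₂ < o)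
    (h : enumO o ξ₁ h₁ = enumO o ξ₂ h₂) : ξ₁ = ξ₂ := by
  have := congrArg Subtype.val ((ToType.mk (o := o)).injective h)
  simpa using this

theorem enumO_tiO {o : Ordinal.{u}} (x : o.ToType) {h : tiO x < o} : enumO o (tiO x) h = x := by
  have h1 : (⟨tiO x, h⟩ : Set.Iio o) = (ToType.mk (o := o)).symm x := rfl
  rw [enumO, h1, (ToType.mk (o := o)).apply_symm_apply]

/-- Enumeration of the predecessors of `α` indexed by ordinals `< κ.ord`. -/
theorem exists_enum (κ : Cardinal.{u}) {α : Ordinal.{u}} (h0 : α ≠ 0) (hcard : α.card ≤ κ) :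
    ∃ g : Ordinal.{u} → Ordinal.{u}, (∀ ξ, g ξ < α) ∧ ∀ β < α, ∃ ξ < κ.ord, g ξ = β := by
  classical
  have hne : Nonempty α.ToType := toType_nonempty_iff_ne_zero.2 h0
  have hle : #α.ToType ≤ #(κ.ord.ToType) := by
    rw [mk_toType, mk_toType, card_ord]; exact hcard
  obtain ⟨e⟩ := Cardinal.le_def _ _ |>.mp hle
  let s : κ.ord.ToType → α.ToType := Function.invFun e
  have hs : Function.Surjective s := fun a => ⟨e a, Function.leftInverse_invFun e.injective a⟩
  refine ⟨fun ξ => if h : ξ < κ.ord then tiO (s (enumO κ.ord ξ h)) else 0,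
    fun ξ => ?_, fun β hβ => ?_⟩
  · dsimp only; split
    · exact tiO_lt _
    · exact pos_iff_ne_zero.2 h0
  · obtain ⟨y, hy⟩ := hs (enumO α β hβ)
    have h : tiO y < κ.ord := tiO_lt y
    refine ⟨tiO y, h, ?_⟩
    show (if h : tiO y < κ.ord then tiO (s (enumO κ.ord (tiO y) h)) else 0) = β
    rw [dif_pos h, enumO_tiO y, hy, tiO_enumO]

/-- The recursively defined almost disjoint family of functions. -/
noncomputable def adF (c : Ordinal.{u} → Ordinal.{u}) (g : Ordinal.{u} → Ordinal.{u} → Ordinal.{u})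
    (hg : ∀ α ξ, α ≠ 0 → g α ξ < α) : Ordinal.{u} → Ordinal.{u} → Ordinal.{u} :=
  Ordinal.lt_wf.fix fun α IH i =>
    if h : α = 0 then 0
    else ⨆ x : (c i).ToType, (IH (g α (tiO x)) (hg α _ h) i + 1)

theorem adF_eq (c : Ordinal.{u} → Ordinal.{u}) (g : Ordinal.{u} → Ordinal.{u} → Ordinal.{u})
    (hg : ∀ α ξ, α ≠ 0 → g α ξ < α) (α i : Ordinal.{u}) :
    adF c g hg α i =
      if α = 0 then 0
      else ⨆ x : (c i).ToType, (adF c g hg (g α (tiO x)) i + 1) :=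
  by unfold adF; exact congrFun (Ordinal.lt_wf.fix_eq (C := fun _ => Ordinal.{u} → Ordinal.{u}) _ α) i

theorem adF_bound (c : Ordinal.{u} → Ordinal.{u}) (g : Ordinal.{u} → Ordinal.{u} → Ordinal.{u})
    (hg : ∀ α ξ, α ≠ 0 → g α ξ < α) (nu : Ordinal.{u} → Cardinal.{u})
    (hreg : ∀ i, (nu i).IsRegular) (hclt : ∀ i, (c i).card < nu i)
    (α i : Ordinal.{u}) : adF c g hg α i < (nu i).ord := by
  induction α using Ordinal.induction with
  | _ α IH =>
    rw [adF_eq]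
    have hpos : (0 : Ordinal) < (nu i).ord := by
      rw [Cardinal.lt_ord, Ordinal.card_zero]
      exact (hreg i).pos
    split
    · exact hpos
    · rename_i h0
      apply Ordinal.iSup_lt_ord
      · rw [mk_toType, (hreg i).cof_eq]
        exact hclt i
      · intro x
        rw [← Order.succ_eq_add_one]
        exact (Cardinal.isSuccLimit_ord (hreg i).aleph0_le).succ_lt (IH _ (hg α _ h0) )

theorem adF_dom (c : Ordinal.{u} → Ordinal.{u}) (g : Ordinal.{u} → Ordinal.{u} → Ordinal.{u})
    (hg : ∀ α ξ, α ≠ 0 → g α ξ < α) (κ lam : Cardinal.{u})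
    (hlamlim : Order.IsSuccLimit lam.ord)
    (hc1 : ∀ i j, i < j → j < lam.ord → c i < c j)
    (hc2 : ∀ ξ, ξ < κ.ord → ∃ i, i < lam.ord ∧ ξ ≤ c i)
    (hg2 : ∀ α, α ≠ 0 → α.card ≤ κ → ∀ β < α, ∃ ξ < κ.ord, g α ξ = β)
    (α β : Ordinal.{u}) (hβα : β < α) (hαc : α.card ≤ κ) :
    ∃ i₀ < lam.ord, ∀ i, i₀ ≤ i → i < lam.ord →
      adF c g hg β i < adF c g hg α i := by
  have h0 : α ≠ 0 := fun h => not_lt_zero (h ▸ hβα)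
  obtain ⟨ξ, hξκ, hξ⟩ := hg2 α h0 hαc β hβα
  obtain ⟨j, hj, hjc⟩ := hc2 ξ hξκ
  refine ⟨j + 1, by rw [← Order.succ_eq_add_one]; exact hlamlim.succ_lt hj,
    fun i hij hi => ?_⟩
  have hξci : ξ < c i := hjc.trans_lt (hc1 j i (lt_of_lt_of_le (lt_add_one j) hij) hi)
  have hterm : adF c g hg β i + 1 ≤ adF c g hg α i := by
    rw [adF_eq c g hg α i, if_neg h0]
    have := Ordinal.le_iSup
      (fun x : (c i).ToType => adF c g hg (g α (tiO x)) i + 1)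
      (enumO (c i) ξ hξci)
    rwa [tiO_enumO hξci, hξ] at this
  exact lt_of_lt_of_le (lt_add_one _) hterm

end AD8

open AD8 Ordinal

/-- For every infinite cardinal `κ` there is an almost disjoint family of `κ⁺` many subsets
of `κ`, each of size `cf(κ)`, with pairwise intersections of size less than `cf(κ)`. -/
theorem statement8 (κ : Cardinal) (hκ : Cardinal.aleph0 ≤ κ) :
    ∃ 𝒜 : Set (Set (Quotient.out κ)),
      #𝒜 = Order.succ κ ∧
      (∀ A ∈ 𝒜, #A = κ.ord.cof) ∧
      ∀ A ∈ 𝒜, ∀ B ∈ 𝒜, A ≠ B → #(A ∩ B : Set (Quotient.out κ)) < κ.ord.cof := by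
  classical
  set lam := κ.ord.cof with hlamdef
  have hκlim : Order.IsSuccLimit κ.ord := Cardinal.isSuccLimit_ord hκ
  have hlamreg : lam.IsRegular := Cardinal.isRegular_cof hκlim
  have hlamℵ : ℵ₀ ≤ lam := hlamreg.aleph0_le
  have hlamκ : lam ≤ κ := Ordinal.cof_ord_le κ
  have hlamlim : Order.IsSuccLimit lam.ord := Cardinal.isSuccLimit_ord hlamℵ
  obtain ⟨fseq, hfseq⟩ := Ordinal.exists_fundamental_sequence κ.ord
  set c : Ordinal → Ordinal := fun i => if h : i < lam.ord then fseq i h else 0 with hcdef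
  have hcκ : ∀ i, c i < κ.ord := by
    intro i
    rw [hcdef]; dsimp only; split
    · rw [← hfseq.blsub_eq]; exact Ordinal.lt_blsub _ _ _
    · exact hκlim.pos
  have hccard : ∀ i, (c i).card < κ := fun i => Cardinal.lt_ord.1 (hcκ i)
  have hc1 : ∀ i j, i < j → j < lam.ord → c i < c j := by
    intro i j hij hj
    rw [hcdef]; dsimp only
    rw [dif_pos (hij.trans hj), dif_pos hj]
    exact hfseq.strict_mono _ _ hij
  have hc2 : ∀ ξ, ξ < κ.ord → ∃ i, i < lam.ord ∧ ξ ≤ c i := by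
    intro ξ hξ
    rw [← hfseq.blsub_eq] at hξ
    obtain ⟨i, hi, hle⟩ := Ordinal.lt_blsub_iff.1 hξ
    refine ⟨i, hi, ?_⟩
    rw [hcdef]; dsimp only; rw [dif_pos hi]; exact hle
  -- enumerations of predecessors
  have hgex : ∀ α : Ordinal, ∃ g : Ordinal → Ordinal,
      (∀ ξ, α ≠ 0 → g ξ < α) ∧ (α ≠ 0 → α.card ≤ κ → ∀ β < α, ∃ ξ < κ.ord, g ξ = β) := by
    intro α
    by_cases h0 : α = 0
    · exact ⟨fun _ => 0, fun ξ h => absurd h0 h, fun h => absurd h0 h⟩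
    · by_cases hcard : α.card ≤ κ
      · obtain ⟨g, hg1', hg2'⟩ := exists_enum κ h0 hcard
        exact ⟨g, fun ξ _ => hg1' ξ, fun _ _ => hg2'⟩
      · exact ⟨fun _ => 0, fun ξ _ => pos_iff_ne_zero.2 h0,
          fun _ h => absurd h hcard⟩
  choose g hg1 hg2 using hgex
  have hg : ∀ α ξ, α ≠ 0 → g α ξ < α := fun α ξ h => hg1 α ξ h
  set f := adF c g hg with hfdef
  -- bounding cardinals
  set nu : Ordinal → Cardinal := fun i => Order.succ (c i).card ⊔ lam with hnudef
  have hnureg : ∀ i, (nu i).IsRegular := by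
    intro i
    rw [hnudef]; dsimp only
    rcases lt_or_ge (c i).card ℵ₀ with h | h
    · have h1 : Order.succ (c i).card < ℵ₀ := Cardinal.isSuccLimit_aleph0.succ_lt h
      rw [max_eq_right (h1.trans_le hlamℵ).le]
      exact hlamreg
    · rcases le_total (Order.succ (c i).card) lam with h2 | h2
      · rw [max_eq_right h2]; exact hlamreg
      · rw [max_eq_left h2]; exact Cardinal.isRegular_succ h
  have hclt : ∀ i, (c i).card < nu i := fun i =>
    lt_of_lt_of_le (Order.lt_succ _) (le_max_left _ _)
  have hnuκ : ∀ i, nu i ≤ κ := by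
    intro i
    rw [hnudef]; dsimp only
    exact max_le (Order.succ_le_of_lt (hccard i)) hlamκ
  have hbound : ∀ α i, f α i < κ.ord := by
    intro α i
    exact (adF_bound c g hg nu hnureg hclt α i).trans_le
      (Cardinal.ord_le_ord.2 (hnuκ i))
  have hdom : ∀ α β : Ordinal, β < α → α.card ≤ κ → ∃ i₀ < lam.ord,
      ∀ i, i₀ ≤ i → i < lam.ord → f β i < f α i := by
    intro α β hβα hαc
    exact adF_dom c g hg κ lam hlamlim hc1 hc2 (fun α' h0' hc' => hg2 α' h0' hc') α β hβα hαc
  -- the ambient type and coding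
  have hT : #(Quotient.out κ) = κ := mk_out κ
  have hι : #(lam.ord.ToType) = lam := by rw [mk_toType, card_ord]
  have hprod : #(lam.ord.ToType × κ.ord.ToType) = #(Quotient.out κ) := by
    rw [mk_prod, Cardinal.lift_id, Cardinal.lift_id, hι, mk_toType, card_ord, hT,
      Cardinal.mul_eq_max hlamℵ hκ, max_eq_right hlamκ]
  obtain ⟨χ⟩ := Cardinal.eq.1 hprod
  set m : Ordinal → lam.ord.ToType → lam.ord.ToType × κ.ord.ToType := fun α i =>
    (i, enumO κ.ord (f α (tiO i)) (hbound α (tiO i))) with hmdef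
  have hminj : ∀ α, Function.Injective (m α) := fun α i j h => congrArg Prod.fst h
  have hmval : ∀ α β i, m α i = m β i → f α (tiO i) = f β (tiO i) := by
    intro α β i h
    have h2 := congrArg Prod.snd h
    simp only [hmdef] at h2
    exact enumO_injective _ _ h2
  -- key almost-disjointness facts for β < α
  have hkey : ∀ α β : Ordinal, β < α → α.card ≤ κ →
      Set.range (m α) ≠ Set.range (m β) ∧
      #(↥(Set.range (m α) ∩ Set.range (m β))) < lam := by
    intro α β hβα hαc
    obtain ⟨i₀, hi₀, hdom'⟩ := hdom α β hβα hαc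
    have hsub : ∀ p : lam.ord.ToType × κ.ord.ToType,
        p ∈ Set.range (m α) ∩ Set.range (m β) → tiO p.1 < i₀ := by
      rintro p ⟨⟨i, rfl⟩, i', hi'⟩
      have hii' : i' = i := congrArg Prod.fst hi'
      subst hii'
      have heq : f β (tiO i') = f α (tiO i') := hmval β α i' hi'
      by_contra hcon
      push_neg at hcon
      have hcon' : i₀ ≤ tiO i' := hcon
      exact absurd heq.symm (hdom' (tiO i') hcon' (tiO_lt i')).ne' 
    constructor
    · intro hrange
      have htii : tiO (enumO lam.ord i₀ hi₀) = i₀ := tiO_enumO hi₀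
      have hmem : m α (enumO lam.ord i₀ hi₀) ∈
          Set.range (m α) ∩ Set.range (m β) := by
        constructor
        · exact ⟨_, rfl⟩
        · rw [← hrange]; exact ⟨_, rfl⟩
      have := hsub _ hmem
      rw [show (m α (enumO lam.ord i₀ hi₀)).1 = enumO lam.ord i₀ hi₀ from rfl, htii] at this
      exact absurd this (lt_irrefl i₀)
    · have hFinj : Function.Injective
          (fun p : ↥(Set.range (m α) ∩ Set.range (m β)) =>
            enumO i₀ (tiO p.1.1) (hsub p.1 p.2)) := by
        intro p q hpq
        have h2 : tiO p.1.1 = tiO q.1.1 := enumO_injective _ _ hpq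
        have h3 : p.1.1 = q.1.1 := tiO_injective h2
        obtain ⟨ip, hip⟩ := p.2.1
        obtain ⟨iq, hiq⟩ := q.2.1
        have hip1 : ip = p.1.1 := congrArg Prod.fst hip
        have hiq1 : iq = q.1.1 := congrArg Prod.fst hiq
        apply Subtype.ext
        rw [← hip, ← hiq, hip1, hiq1, h3]
      calc #(↥(Set.range (m α) ∩ Set.range (m β))) ≤ #(i₀.ToType) :=
            Cardinal.mk_le_of_injective hFinj
        _ = i₀.card := mk_toType i₀
        _ < lam := Cardinal.lt_ord.1 hi₀
  -- the index type for the family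
  have htiScard : ∀ s : (Order.succ κ).ord.ToType, (tiO s).card ≤ κ := by
    intro s
    have := Cardinal.lt_ord.1 (tiO_lt s)
    exact Order.lt_succ_iff.1 this
  set Φ : (Order.succ κ).ord.ToType → Set (Quotient.out κ) :=
    fun s => χ '' Set.range (m (tiO s)) with hΦdef
  have hΦne : ∀ s t, tiO t < tiO s → Φ s ≠ Φ t := by
    intro s t hst h
    have hrange : Set.range (m (tiO s)) = Set.range (m (tiO t)) :=
      Set.image_injective.2 χ.injective h
    exact (hkey (tiO s) (tiO t) hst (htiScard s)).1 hrange
  have hΦinj : Function.Injective Φ := by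
    intro s t h
    by_contra hne
    have hne' : tiO s ≠ tiO t := fun hh => hne (tiO_injective hh)
    rcases hne'.lt_or_gt with hlt | hlt
    · exact hΦne t s hlt h.symm
    · exact hΦne s t hlt h
  refine ⟨Set.range Φ, ?_, ?_, ?_⟩
  · rw [Cardinal.mk_range_eq _ hΦinj, mk_toType, card_ord]
  · rintro A ⟨s, rfl⟩
    simp only [hΦdef]
    rw [Cardinal.mk_image_eq χ.injective, Cardinal.mk_range_eq _ (hminj _), hι]
  · rintro A ⟨s, rfl⟩ B ⟨t, rfl⟩ hAB
    have hst : tiO s ≠ tiO t := by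
      intro hh
      exact hAB (by simp only [hΦdef, hh])
    have hinter : Φ s ∩ Φ t = χ '' (Set.range (m (tiO s)) ∩ Set.range (m (tiO t))) := by
      simp only [hΦdef]
      rw [Set.image_inter χ.injective]
    rw [hinter, Cardinal.mk_image_eq χ.injective]
    rcases hst.lt_or_gt with hlt | hlt
    · rw [Set.inter_comm]
      exact (hkey (tiO t) (tiO s) hlt (htiScard t)).2
    · exact (hkey (tiO s) (tiO t) hlt (htiScard s)).2
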